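/- Define f(s) = (s² + 4·s)/(5·s + 2). The set of real solutions of the equation f(f(s)) = s (at points where both denominators are nonzero) is exactly {0, 1/2, −3 + √7, −3 − √7}. In particular, s = 1/2 is the unique solution in (0,1], f(1/2) = 1/2, and at the symmetric offer pair s1 = s2 = 1/2 with both responders choosing each proposer with probability 1/2, the expected payoffs Π_P1 = Π_P2 = Π_R1 = Π_R2 = 3/8. -/

import Mathlib

/-- The best-response offer map of the two-proposer–two-responder Ultimatum Game. -/
noncomputable def fmap (s : ℝ) : ℝ := (s^2 + 4*s) / (5*s + 2)

/-- Expected payoff of proposer 1 under the responders' evolutionarily stable strategy. -/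
noncomputable def PiP1 (s1 s2 : ℝ) : ℝ :=
  3 * s2 * (2 * s1 - s2) * (1 - s1) / (s1 + s2)^2

/-- Expected payoff of proposer 2 under the responders' evolutionarily stable strategy. -/
noncomputable def PiP2 (s1 s2 : ℝ) : ℝ :=
  3 * s1 * (2 * s2 - s1) * (1 - s2) / (s1 + s2)^2

/-- Expected payoff of a responder playing `p` against a responder playing `q`. -/
noncomputable def PiR (s1 s2 p q : ℝ) : ℝ :=
  s1 * p * (1 - q / 2) + s2 * (1 - p) * (1 + q) / 2

private lemma fmap_forward (s : ℝ) (hD : 5*s + 2 ≠ 0) (hE : 5 * fmap s + 2 ≠ 0)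
    (h : fmap (fmap s) = s) : s * (2*s - 1) * (s^2 + 6*s + 2) = 0 := by
  have hE' : 5*s^2 + 30*s + 4 ≠ 0 := by
    intro h0; apply hE; unfold fmap; field_simp; linarith
  unfold fmap at h
  rw [show 5*((s^2+4*s)/(5*s+2))+2 = (5*s^2+30*s+4)/(5*s+2) by field_simp; ring] at h
  field_simp at h
  rw [div_eq_iff (mul_ne_zero (by contrapose! hD; linarith) (by contrapose! hE'; linarith))] at h
  have h2 : (5*s+2)^2 * (12 * (s * (2*s - 1) * (s^2 + 6*s + 2))) = 0 := by
    linear_combination -(5*s+2)^2 * h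
  rcases mul_eq_zero.1 h2 with h3 | h3
  · exact absurd (pow_eq_zero_iff (by norm_num)|>.1 h3) hD
  · linarith

private lemma fmap_quad (r : ℝ) (hr : r^2 + 6*r + 2 = 0) :
    5*r + 2 ≠ 0 ∧ 5 * fmap r + 2 ≠ 0 ∧ fmap (fmap r) = r := by
  have hD : 5*r + 2 ≠ 0 := by
    intro h0
    have : r = -2/5 := by linarith
    rw [this] at hr; norm_num at hr
  have hrw : 5 * fmap r + 2 = -6 / (5*r+2) := by
    unfold fmap; field_simp; linarith
  have hE : 5 * fmap r + 2 ≠ 0 := by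
    rw [hrw]; exact div_ne_zero (by norm_num) hD
  refine ⟨hD, hE, ?_⟩
  unfold fmap
  rw [show 5*((r^2+4*r)/(5*r+2))+2 = (5*r^2+30*r+4)/(5*r+2) by field_simp; ring]
  have hE' : 5*r^2 + 30*r + 4 ≠ 0 := by
    intro h0; nlinarith
  field_simp
  rw [div_eq_iff (mul_ne_zero (by contrapose! hD; linarith) (by contrapose! hE'; linarith))]
  linear_combination (-12*r*(2*r-1)) * hr

theorem stmt7 :
    ({s : ℝ | 5*s + 2 ≠ 0 ∧ 5 * fmap s + 2 ≠ 0 ∧ fmap (fmap s) = s} =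
      {0, 1/2, -3 + Real.sqrt 7, -3 - Real.sqrt 7}) ∧
    (∀ s ∈ Set.Ioc (0:ℝ) 1, fmap (fmap s) = s → s = 1/2) ∧
    fmap (1/2) = 1/2 ∧
    PiP1 (1/2) (1/2) = 3/8 ∧ PiP2 (1/2) (1/2) = 3/8 ∧
    PiR (1/2) (1/2) (1/2) (1/2) = 3/8 := by
  have h7 : Real.sqrt 7 * Real.sqrt 7 = 7 := Real.mul_self_sqrt (by norm_num)
  have hq1 : (-3 + Real.sqrt 7)^2 + 6*(-3 + Real.sqrt 7) + 2 = 0 := by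
    linear_combination h7
  have hq2 : (-3 - Real.sqrt 7)^2 + 6*(-3 - Real.sqrt 7) + 2 = 0 := by
    linear_combination h7
  have hset : {s : ℝ | 5*s + 2 ≠ 0 ∧ 5 * fmap s + 2 ≠ 0 ∧ fmap (fmap s) = s} =
      {0, 1/2, -3 + Real.sqrt 7, -3 - Real.sqrt 7} := by
    ext s
    simp only [Set.mem_setOf_eq, Set.mem_insert_iff, Set.mem_singleton_iff]
    constructor
    · rintro ⟨hD, hE, h⟩
      have key := fmap_forward s hD hE h
      rcases mul_eq_zero.1 key with h1 | h1
      · rcases mul_eq_zero.1 h1 with h2 | h2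
        · exact Or.inl h2
        · exact Or.inr (Or.inl (by linarith))
      · have : (s - (-3 + Real.sqrt 7)) * (s - (-3 - Real.sqrt 7)) = 0 := by
          linear_combination h1 - h7
        rcases mul_eq_zero.1 this with h2 | h2
        · exact Or.inr (Or.inr (Or.inl (by linarith)))
        · exact Or.inr (Or.inr (Or.inr (by linarith)))
    · rintro (rfl | rfl | rfl | rfl)
      · refine ⟨by norm_num, ?_, ?_⟩ <;> unfold fmap <;> norm_num
      · refine ⟨by norm_num, ?_, ?_⟩ <;> unfold fmap <;> norm_num
      · exact fmap_quad _ hq1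
      · exact fmap_quad _ hq2
  refine ⟨hset, ?_, ?_, ?_, ?_, ?_⟩
  · intro s hs h
    have hs0 : 0 < s := hs.1
    have hD : 5*s + 2 ≠ 0 := by positivity
    have hfpos : 0 < fmap s := by
      unfold fmap
      apply div_pos (by nlinarith) (by linarith)
    have hE : 5 * fmap s + 2 ≠ 0 := by positivity
    have hmem : s ∈ ({0, 1/2, -3 + Real.sqrt 7, -3 - Real.sqrt 7} : Set ℝ) := by
      rw [← hset]; exact ⟨hD, hE, h⟩
    have hsqrt : Real.sqrt 7 < 3 := by
      nlinarith [Real.sqrt_nonneg 7]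
    simp only [Set.mem_insert_iff, Set.mem_singleton_iff] at hmem
    rcases hmem with rfl | rfl | rfl | rfl
    · exact absurd hs0 (by norm_num)
    · rfl
    · linarith
    · nlinarith [Real.sqrt_nonneg 7]
  · unfold fmap; norm_num
  · unfold PiP1; norm_num
  · unfold PiP2; norm_num
  · unfold PiR; norm_num
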